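/- There exists a constant C > 0 such that for every even positive integer d, |H_d(0) − (−1)^{d/2} · (2/π)^{1/4} · d^{−1/4}| ≤ C · d^{−5/4}. -/

import Mathlib

open MeasureTheory ProbabilityTheory Real

/-- The `d`-th normalized Hermite polynomial (as a function on `ℝ`): the monic
probabilist's Hermite polynomial divided by `√(d!)`. -/
noncomputable def normHermite (d : ℕ) (x : ℝ) : ℝ :=
  Polynomial.aeval x (Polynomial.hermite d) / Real.sqrt (Nat.factorial d)

section Aux

open Nat Stirling Filter Topology

noncomputable def aSeq (m : ℕ) : ℝ := (Nat.centralBinom m : ℝ) / 4^m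

noncomputable def fS (m : ℕ) : ℝ := π * m * aSeq m ^ 2
noncomputable def gS (m : ℕ) : ℝ := π * (m + 1/2) * aSeq m ^ 2

lemma doubleFac_eq (m : ℕ) : (2*m)! = 2^m * m ! * (2*m-1)‼ := by
  cases m with
  | zero => rfl
  | succ m =>
    have h1 : 2*(m+1) = (2*m+1)+1 := by ring
    rw [h1, Nat.factorial_eq_mul_doubleFactorial]
    have h2 : (2*m+1+1) = 2*(m+1) := by ring
    have h3 : 2*(m+1)-1 = 2*m+1 := by omega
    rw [h2, h3, Nat.doubleFactorial_two_mul]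

lemma hermite_at_zero (m : ℕ) : Polynomial.aeval (0:ℝ) (Polynomial.hermite (2*m)) =
    (-1:ℝ)^m * ((2*m-1)‼ : ℝ) := by
  have h := Polynomial.coeff_hermite_explicit m 0
  rw [add_zero, Nat.choose_zero_right] at h
  have : Polynomial.aeval (0:ℝ) (Polynomial.hermite (2*m)) =
      ((Polynomial.hermite (2*m)).coeff 0 : ℝ) := by
    rw [Polynomial.aeval_def, Polynomial.eval₂_at_zero]; rfl
  rw [this, h]; push_cast; ring

lemma cb_cast (m : ℕ) : (Nat.centralBinom m : ℝ) * (m ! * m !) = (2*m)! := by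
  have := Nat.choose_mul_factorial_mul_factorial (Nat.le_mul_of_pos_left m (by norm_num : 0 < 2))
  rw [show 2*m - m = m by omega] at this
  exact_mod_cast congrArg (Nat.cast (R := ℝ)) (by rw [Nat.centralBinom, ← mul_assoc]; exact this)

lemma sq_stirling (n : ℕ) :
    stirlingSeq n ^ 2 = (n ! : ℝ)^2 / (2 * n * ((n / Real.exp 1) ^ n)^2) := by
  rw [stirlingSeq]
  rw [div_pow, mul_pow, Real.sq_sqrt (by positivity)]

lemma f_eq (m : ℕ) (hm : 0 < m) :
    π * m * aSeq m ^ 2 = π * stirlingSeq (2*m)^2 / stirlingSeq m ^4 := by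
  have hm' : (0:ℝ) < m := by exact_mod_cast hm
  have h2 := sq_stirling (2*m)
  have h1 := sq_stirling m
  have hcb := cb_cast m
  have hfac : (0:ℝ) < (m ! : ℝ) := by positivity
  have hexp : (0:ℝ) < Real.exp 1 := Real.exp_pos 1
  have hkey : ((2*m : ℕ) : ℝ) / Real.exp 1 = 2 * ((m:ℝ)/Real.exp 1) := by push_cast; ring
  have hpowkey : (((2*m : ℕ):ℝ) / Real.exp 1) ^ (2*m) = 4^m * (((m:ℝ)/Real.exp 1)^m)^2 := by
    rw [hkey, mul_pow, ← pow_mul, pow_mul 2 2 m]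
    norm_num [mul_comm]
  rw [hpowkey, ← hcb] at h2
  have hc2 : ((2*m : ℕ) : ℝ) = 2 * m := by push_cast; ring
  rw [hc2] at h2
  rw [show stirlingSeq m ^ 4 = (stirlingSeq m ^ 2)^2 by ring, h1, h2, aSeq]
  have hpow : (0:ℝ) < ((m:ℝ)/Real.exp 1)^m := by positivity
  have h4 : (0:ℝ) < 4^m := by positivity
  field_simp

lemma hrec (m : ℕ) : ((m:ℝ)+1) * (Nat.centralBinom (m+1)) = 2*(2*m+1)*(Nat.centralBinom m) := by
  have := Nat.succ_mul_centralBinom_succ m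
  exact_mod_cast congrArg (Nat.cast (R := ℝ)) this

lemma fS_mono : Monotone fS := by
  apply monotone_nat_of_le_succ
  intro m
  have h := hrec m
  have hx : (0:ℝ) < Nat.centralBinom m := by exact_mod_cast Nat.centralBinom_pos m
  have hQ : (0:ℝ) < 4^m := by positivity
  simp only [fS, aSeq]
  push_cast
  rw [div_pow, div_pow, show (4:ℝ)^(m+1) = 4 * 4^m from by ring]
  rw [mul_div_assoc', mul_div_assoc', div_le_div_iff₀ (by positivity) (by positivity)]
  have h2 := congrArg (· ^ 2) h
  have h3 : π * (4^m:ℝ)^2 * (((m:ℝ)+1) * (Nat.centralBinom (m+1)))^2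
      = π * (4^m:ℝ)^2 * (2*(2*(m:ℝ)+1)*(Nat.centralBinom m))^2 := by rw [h2]
  nlinarith [h3, mul_pos (mul_pos pi_pos (mul_pos hQ hQ)) (mul_pos hx hx),
    (by positivity : (0:ℝ) < (m:ℝ)+1)]

lemma gS_anti : Antitone gS := by
  apply antitone_nat_of_succ_le
  intro m
  have h := hrec m
  have hx : (0:ℝ) < Nat.centralBinom m := by exact_mod_cast Nat.centralBinom_pos m
  have hQ : (0:ℝ) < 4^m := by positivity
  have hm1 : (0:ℝ) < (m:ℝ)+1 := by positivity
  have hy : (Nat.centralBinom (m+1):ℝ) = 2*(2*(m:ℝ)+1)*(Nat.centralBinom m)/((m:ℝ)+1) := by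
    field_simp
    linarith [h]
  simp only [gS, aSeq]
  push_cast
  rw [hy, div_div, div_pow, div_pow, show (4:ℝ)^(m+1) = 4 * 4^m from by ring]
  rw [mul_div_assoc', mul_div_assoc', div_le_div_iff₀ (by positivity) (by positivity)]
  nlinarith [mul_pos (mul_pos pi_pos (mul_pos hQ hQ)) (mul_pos hx hx),
    (by positivity : (0:ℝ) ≤ (m:ℝ))]

lemma two_mul_tendsto : Tendsto (fun m : ℕ => 2*m) atTop atTop := by
  apply tendsto_atTop_atTop_of_monotone (fun a b h => by omega) (fun b => ⟨b, by omega⟩)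

lemma fS_tendsto : Tendsto fS atTop (𝓝 1) := by
  have hsq : Real.sqrt π ^ 2 = π := Real.sq_sqrt pi_pos.le
  have hne : Real.sqrt π ^ 4 ≠ 0 := by positivity
  have hT : Tendsto (fun m : ℕ => π * stirlingSeq (2*m)^2 / stirlingSeq m ^4) atTop
      (𝓝 (π * Real.sqrt π ^2 / Real.sqrt π ^4)) := by
    exact (tendsto_const_nhds.mul ((tendsto_stirlingSeq_sqrt_pi.comp two_mul_tendsto).pow 2)).div
      (tendsto_stirlingSeq_sqrt_pi.pow 4) hne
  have hval : π * Real.sqrt π ^2 / Real.sqrt π ^4 = 1 := by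
    rw [show Real.sqrt π ^ 4 = (Real.sqrt π ^2)^2 by ring, hsq]
    field_simp
  rw [hval] at hT
  apply hT.congr'
  filter_upwards [eventually_ge_atTop 1] with m hm
  exact (f_eq m hm).symm

lemma gS_tendsto : Tendsto gS atTop (𝓝 1) := by
  have h1 : Tendsto (fun m : ℕ => ((2:ℝ)*m)) atTop atTop := by
    exact (tendsto_natCast_atTop_atTop).const_mul_atTop two_pos
  have h2 : Tendsto (fun m : ℕ => 1 + ((2:ℝ)*m)⁻¹) atTop (𝓝 (1 + 0)) :=
    tendsto_const_nhds.add h1.inv_tendsto_atTop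
  have h3 : Tendsto (fun m : ℕ => fS m * (1 + ((2:ℝ)*m)⁻¹)) atTop (𝓝 (1 * (1+0))) :=
    fS_tendsto.mul h2
  norm_num at h3
  apply h3.congr'
  filter_upwards [eventually_ge_atTop 1] with m hm
  have hm' : (0:ℝ) < m := by exact_mod_cast hm
  simp only [fS, gS]
  field_simp

lemma f_le_one (m : ℕ) : fS m ≤ 1 := fS_mono.ge_of_tendsto fS_tendsto m

lemma one_le_g (m : ℕ) : 1 ≤ gS m := gS_anti.le_of_tendsto gS_tendsto m

lemma rpow_gap (x : ℝ) (hx : 1 ≤ x) :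
    x ^ (-(1:ℝ)/4) - (x + 1/2) ^ (-(1:ℝ)/4) ≤ (1/8) * x ^ (-(5:ℝ)/4) := by
  have hx0 : (0:ℝ) < x := by linarith
  set u := x ^ ((1:ℝ)/4) with hu_def
  set v := (x + 1/2) ^ ((1:ℝ)/4) with hv_def
  set β := (1/8) * x ^ (-(3:ℝ)/4) with hβ_def
  have hu : 0 < u := rpow_pos_of_pos hx0 _
  have hv : 0 < v := rpow_pos_of_pos (by linarith) _
  have hβ0 : 0 ≤ β := by positivity
  have hu4 : u ^ 4 = x := by
    rw [hu_def, ← rpow_natCast (x ^ ((1:ℝ)/4)) 4, ← rpow_mul hx0.le]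
    norm_num
  have hu3β : u ^ 3 * β = 1/8 := by
    rw [hu_def, hβ_def, ← rpow_natCast (x ^ ((1:ℝ)/4)) 3, ← rpow_mul hx0.le]
    rw [mul_comm ((1:ℝ)/8), ← mul_assoc, ← rpow_add hx0]
    norm_num
  have hpow : x + 1/2 ≤ (u + β) ^ 4 := by
    nlinarith [hu.le, hβ0, hu4, hu3β, sq_nonneg β, sq_nonneg u, sq_nonneg (u*β),
      sq_nonneg (u+β), mul_nonneg hu.le hβ0, mul_nonneg (mul_nonneg hβ0 hβ0) hβ0,
      mul_nonneg (mul_nonneg hu.le hβ0) hβ0]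
  have hvle : v ≤ u + β := by
    have h1 : v ≤ ((u + β) ^ 4) ^ ((1:ℝ)/4) :=
      rpow_le_rpow (by linarith) hpow (by norm_num)
    have h2 : ((u + β) ^ 4) ^ ((1:ℝ)/4) = u + β := by
      rw [← rpow_natCast (u + β) 4, ← rpow_mul (by positivity)]
      norm_num
    rwa [h2] at h1
  have huv : u ≤ v := rpow_le_rpow hx0.le (by linarith) (by norm_num)
  have e1 : x ^ (-(1:ℝ)/4) = u⁻¹ := by
    rw [hu_def, ← rpow_neg hx0.le]; norm_num
  have e2 : (x + 1/2) ^ (-(1:ℝ)/4) = v⁻¹ := by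
    rw [hv_def, ← rpow_neg (by linarith)]; norm_num
  rw [e1, e2]
  have h1 : u⁻¹ - v⁻¹ = (v - u) / (u * v) := by field_simp
  have h2 : (v - u) / (u * v) ≤ β / (u * u) :=
    div_le_div₀ hβ0 (by linarith) (by positivity) (by nlinarith)
  have h3 : β / (u * u) = (1/8) * x ^ (-(5:ℝ)/4) := by
    have huu : u * u = x ^ ((1:ℝ)/2) := by
      rw [hu_def, ← rpow_add hx0]; norm_num
    rw [huu, hβ_def, mul_div_assoc, ← rpow_sub hx0]
    norm_num
  rw [h1, ← h3]
  exact h2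

lemma normHermite_eq (m : ℕ) (hm : 0 < m) :
    normHermite (2*m) 0 = (-1:ℝ)^m * Real.sqrt (aSeq m) := by
  rw [normHermite, hermite_at_zero]
  have hfacs : ((2*m)! : ℝ) = 2^m * (m ! : ℝ) * ((2*m-1)‼:ℝ) := by
    exact_mod_cast congrArg (Nat.cast (R := ℝ)) (doubleFac_eq m)
  have hcb := cb_cast m
  have h4 : ((4:ℝ))^m = 2^m * 2^m := by rw [← mul_pow]; norm_num
  have hfpos : (0:ℝ) < (m ! : ℝ) := by positivity
  have hmain : aSeq m = ((2*m-1)‼:ℝ)^2 / ((2*m)! : ℝ) := by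
    rw [aSeq, div_eq_div_iff (by positivity) (by positivity)]
    apply mul_left_cancel₀ (show ((m !:ℝ))^2 ≠ 0 by positivity)
    linear_combination ((2*m)! : ℝ) * hcb + (((2*m)!:ℝ) + 2^m * (m !:ℝ) * ((2*m-1)‼:ℝ)) * hfacs
      - ((m !:ℝ))^2 * ((2*m-1)‼:ℝ)^2 * h4
  rw [hmain, Real.sqrt_div (by positivity), Real.sqrt_sq (by positivity)]
  ring

end Aux

theorem stmt_10 :
    ∃ C : ℝ, 0 < C ∧ ∀ d : ℕ, 0 < d → Even d →
      |normHermite d 0 - (-1 : ℝ) ^ (d / 2) * (2 / π) ^ ((1 : ℝ) / 4) * (d : ℝ) ^ (-(1 : ℝ) / 4)|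
        ≤ C * (d : ℝ) ^ (-(5 : ℝ) / 4) := by
  refine ⟨1, one_pos, ?_⟩
  intro d hd hev
  obtain ⟨m, rfl⟩ : ∃ m, d = 2*m := by
    obtain ⟨k, hk⟩ := hev; exact ⟨k, by omega⟩
  have hm : 0 < m := by omega
  have hm1 : (1:ℝ) ≤ m := by exact_mod_cast hm
  have hm' : (0:ℝ) < m := by linarith
  rw [normHermite_eq m hm, show (2*m)/2 = m from by omega]
  have hd2 : ((2*m : ℕ) : ℝ) = 2 * m := by push_cast; ring
  rw [hd2]
  set a := aSeq m with ha_def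
  have ha_pos : 0 < a := by
    rw [ha_def, aSeq]
    have : (0:ℝ) < Nat.centralBinom m := by exact_mod_cast Nat.centralBinom_pos m
    positivity
  have hπm : (0:ℝ) < π * m := by positivity
  have hπm2 : (0:ℝ) < π * ((m:ℝ) + 1/2) := by positivity
  -- the target equals (π m)^(-1/4)
  have hT : (2/π) ^ ((1:ℝ)/4) * ((2:ℝ)*m) ^ (-(1:ℝ)/4) = (π*(m:ℝ)) ^ (-(1:ℝ)/4) := by
    rw [show (-(1:ℝ)/4) = -((1:ℝ)/4) by norm_num]
    rw [Real.rpow_neg (by positivity : (0:ℝ) ≤ 2*(m:ℝ)), Real.rpow_neg hπm.le,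
      ← Real.inv_rpow (by positivity), ← Real.mul_rpow (by positivity) (by positivity),
      ← Real.inv_rpow (by positivity)]
    congr 1
    field_simp
  -- bounds for sqrt a
  have hsq4 : Real.sqrt a ^ 4 = a^2 := by
    rw [show Real.sqrt a ^ 4 = (Real.sqrt a ^2)^2 by ring, Real.sq_sqrt ha_pos.le]
  have hrpow4 : ∀ y : ℝ, 0 < y → (y ^ (-(1:ℝ)/4))^4 = y⁻¹ := by
    intro y hy
    rw [← Real.rpow_natCast (y ^ (-(1:ℝ)/4)) 4, ← Real.rpow_mul hy.le]
    norm_num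
    exact (Real.rpow_neg_one y)
  have hf := f_le_one m
  rw [fS, ← ha_def] at hf
  have hg := one_le_g m
  rw [gS, ← ha_def] at hg
  have hupper : Real.sqrt a ≤ (π*(m:ℝ)) ^ (-(1:ℝ)/4) := by
    apply le_of_pow_le_pow_left₀ (by norm_num : (4:ℕ) ≠ 0) (by positivity)
    rw [hsq4, hrpow4 _ hπm, inv_eq_one_div, le_div_iff₀ hπm]
    nlinarith [hf]
  have hlower : (π*((m:ℝ)+1/2)) ^ (-(1:ℝ)/4) ≤ Real.sqrt a := by
    apply le_of_pow_le_pow_left₀ (by norm_num : (4:ℕ) ≠ 0) (by positivity)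
    rw [hsq4, hrpow4 _ hπm2, inv_eq_one_div, div_le_iff₀ hπm2]
    nlinarith [hg]
  have hπe : π ^ (-(1:ℝ)/4) ≤ 1 :=
    Real.rpow_le_one_of_one_le_of_nonpos (by linarith [Real.pi_gt_three]) (by norm_num)
  have hinner_nonneg : (0:ℝ) ≤ (m:ℝ)^(-(1:ℝ)/4) - ((m:ℝ)+1/2)^(-(1:ℝ)/4) :=
    sub_nonneg.mpr (Real.rpow_le_rpow_of_nonpos hm' (by linarith) (by norm_num))
  have hinner_le := rpow_gap (m:ℝ) hm1
  have h2pow : (1/8 : ℝ) ≤ (2:ℝ)^(-(5:ℝ)/4) := by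
    have h1 : (2:ℝ)^(-(2:ℝ)) ≤ (2:ℝ)^(-(5:ℝ)/4) :=
      Real.rpow_le_rpow_of_exponent_le one_le_two (by norm_num)
    have h2 : (2:ℝ)^(-(2:ℝ)) = 1/4 := by
      rw [show (-(2):ℝ) = ((-2:ℤ):ℝ) by norm_num, Real.rpow_intCast]
      norm_num
    linarith
  have hgaps : (π*(m:ℝ))^(-(1:ℝ)/4) - (π*((m:ℝ)+1/2))^(-(1:ℝ)/4) ≤ ((2:ℝ)*m)^(-(5:ℝ)/4) := by
    rw [Real.mul_rpow pi_pos.le hm'.le, Real.mul_rpow pi_pos.le (by linarith),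
      Real.mul_rpow (by norm_num) hm'.le, ← mul_sub]
    calc π^(-(1:ℝ)/4) * ((m:ℝ)^(-(1:ℝ)/4) - ((m:ℝ)+1/2)^(-(1:ℝ)/4))
        ≤ 1 * ((1/8) * (m:ℝ)^(-(5:ℝ)/4)) :=
          mul_le_mul hπe hinner_le hinner_nonneg (by norm_num)
      _ ≤ (2:ℝ)^(-(5:ℝ)/4) * (m:ℝ)^(-(5:ℝ)/4) := by
          rw [one_mul]
          exact mul_le_mul_of_nonneg_right h2pow (Real.rpow_nonneg hm'.le _)
  have habs : (-1:ℝ)^m * Real.sqrt a - (-1:ℝ)^m * (2/π)^((1:ℝ)/4) * ((2:ℝ)*m)^(-(1:ℝ)/4)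
      = (-1:ℝ)^m * (Real.sqrt a - (π*(m:ℝ))^(-(1:ℝ)/4)) := by
    rw [mul_assoc, hT]; ring
  rw [habs, abs_mul, abs_pow, abs_neg, abs_one, one_pow, one_mul,
    abs_of_nonpos (by linarith [hupper]), one_mul]
  linarith [hgaps, hlower]
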